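/- arXiv:2002.09750 — 5 statements merged into one kernel-verified Lean document; each statement's English description precedes it below -/
import Mathlib

section
/- Let n ≥ 1 and let f : ℝⁿ → ℝ be convex and Lipschitz continuous. Define the asymptotic function f'∞ : ℝⁿ → ℝ by f'∞(d) = sup_{s>0} (f(s·d) − f(0))/s (this supremum is finite because f is Lipschitz). Then for every x ∈ ℝⁿ one has inf_{u ∈ ℝⁿ} ( f(u) + f'∞(x − u) ) = f(x); that is, the inf-convolution of f with its asymptotic function equals f. -/
open NNReal

/-- The inf-convolution of a convex Lipschitz function `f` with its asymptotic
function `d ↦ sup_{s>0} (f (s • d) - f 0) / s` equals `f`. -/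
theorem infConv_asymptotic_eq_self (n : ℕ) (hn : 1 ≤ n)
    (f : EuclideanSpace ℝ (Fin n) → ℝ)
    (hconv : ConvexOn ℝ Set.univ f) (K : ℝ≥0) (hlip : LipschitzWith K f)
    (fAsymp : EuclideanSpace ℝ (Fin n) → ℝ)
    (hfAsymp : ∀ d, fAsymp d = ⨆ s : {s : ℝ // 0 < s}, (f (s.1 • d) - f 0) / s.1)
    (x : EuclideanSpace ℝ (Fin n)) :
    (⨅ u : EuclideanSpace ℝ (Fin n), (f u + fAsymp (x - u))) = f x := by
  have hne : Nonempty {s : ℝ // 0 < s} := ⟨⟨1, one_pos⟩⟩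
  -- the sup defining fAsymp is over a set bounded above
  have hbdd : ∀ d, BddAbove (Set.range fun s : {s : ℝ // 0 < s} =>
      (f (s.1 • d) - f 0) / s.1) := by
    intro d
    refine ⟨K * ‖d‖, ?_⟩
    rintro _ ⟨⟨s, hs⟩, rfl⟩
    dsimp
    rw [div_le_iff₀ hs]
    have h2 : |f (s • d) - f 0| ≤ (K : ℝ) * ‖s • d‖ := by
      have := hlip.dist_le_mul (s • d) 0
      simpa [Real.dist_eq, dist_eq_norm] using this
    have h3 : ‖s • d‖ = s * ‖d‖ := by
      rw [norm_smul, Real.norm_eq_abs, abs_of_pos hs]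
    have h1 : f (s • d) - f 0 ≤ |f (s • d) - f 0| := le_abs_self _
    rw [h3] at h2
    nlinarith
  -- key inequality
  have key : ∀ u d : EuclideanSpace ℝ (Fin n), f (u + d) - f u ≤ fAsymp d := by
    intro u d
    rw [hfAsymp]
    refine le_of_forall_pos_le_add ?_
    intro ε hε
    set s : ℝ := 2 + 2 * (K : ℝ) * ‖u‖ / ε with hs_def
    have hKu : 0 ≤ 2 * (K : ℝ) * ‖u‖ := by positivity
    have hs1 : (1 : ℝ) < s := by
      have : 0 ≤ 2 * (K : ℝ) * ‖u‖ / ε := by positivity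
      simp only [hs_def]; linarith
    have hs0 : (0 : ℝ) < s := by linarith
    have hs1' : (0 : ℝ) < s - 1 := by linarith
    have hmain : 2 * (K : ℝ) * ‖u‖ ≤ ε * (s - 1) := by
      have : ε * (2 * (K : ℝ) * ‖u‖ / ε) = 2 * (K : ℝ) * ‖u‖ := by
        field_simp
      simp only [hs_def]
      nlinarith
    -- convexity step
    have ha : (0 : ℝ) ≤ 1 / s := by positivity
    have hb : (0 : ℝ) ≤ 1 - 1 / s := by
      rw [sub_nonneg, div_le_one hs0]; linarith
    have hab : 1 / s + (1 - 1 / s) = 1 := by ring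
    have hcomb : (1 / s) • (s • d) + (1 - 1 / s) • ((s / (s - 1)) • u) = u + d := by
      rw [smul_smul, smul_smul]
      have e1 : (1 / s) * s = 1 := by field_simp
      have e2 : (1 - 1 / s) * (s / (s - 1)) = 1 := by
        field_simp
      rw [e1, e2, one_smul, one_smul, add_comm]
    have hc := hconv.2 (Set.mem_univ (s • d)) (Set.mem_univ ((s / (s - 1)) • u)) ha hb hab
    rw [hcomb] at hc
    simp only [smul_eq_mul] at hc
    -- Lipschitz bounds
    have hL1 : f 0 - f ((s / (s - 1)) • u) ≤ (K : ℝ) * (s / (s - 1) * ‖u‖) := by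
      have h := hlip.dist_le_mul 0 ((s / (s - 1)) • u)
      have hnorm : ‖(0 : EuclideanSpace ℝ (Fin n)) - (s / (s - 1)) • u‖
          = s / (s - 1) * ‖u‖ := by
        rw [zero_sub, norm_neg, norm_smul, Real.norm_eq_abs,
          abs_of_pos (by positivity : (0:ℝ) < s / (s - 1))]
      rw [Real.dist_eq, dist_eq_norm, hnorm] at h
      exact (le_abs_self _).trans h
    have hL2 : f ((s / (s - 1)) • u) - f u ≤ (K : ℝ) * (1 / (s - 1) * ‖u‖) := by
      have h := hlip.dist_le_mul ((s / (s - 1)) • u) u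
      have hnorm : ‖(s / (s - 1)) • u - u‖ = 1 / (s - 1) * ‖u‖ := by
        have : (s / (s - 1)) • u - u = (s / (s - 1) - 1) • u := by
          rw [sub_smul, one_smul]
        rw [this, norm_smul, Real.norm_eq_abs]
        have ht1 : s / (s - 1) - 1 = 1 / (s - 1) := by field_simp; ring
        rw [ht1, abs_of_pos (by positivity : (0:ℝ) < 1 / (s - 1))]
      rw [Real.dist_eq, dist_eq_norm, hnorm] at h
      exact (le_abs_self _).trans h
    -- the sup bound
    have hsup : (f (s • d) - f 0) / s ≤
        ⨆ t : {t : ℝ // 0 < t}, (f (t.1 • d) - f 0) / t.1 :=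
      le_ciSup (hbdd d) ⟨s, hs0⟩
    -- arithmetic
    have hid : (1 / s) * f (s • d) + (1 - 1 / s) * f ((s / (s - 1)) • u) - f u
        = (f (s • d) - f 0) / s + (1 / s) * (f 0 - f ((s / (s - 1)) • u))
          + (f ((s / (s - 1)) • u) - f u) := by ring
    have herr : (1 / s) * ((K : ℝ) * (s / (s - 1) * ‖u‖))
        + (K : ℝ) * (1 / (s - 1) * ‖u‖) = 2 * (K : ℝ) * ‖u‖ / (s - 1) := by
      field_simp
      ring
    have herr2 : 2 * (K : ℝ) * ‖u‖ / (s - 1) ≤ ε := by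
      rw [div_le_iff₀ hs1']
      linarith [hmain]
    have hprod : (1 / s) * (f 0 - f ((s / (s - 1)) • u))
        ≤ (1 / s) * ((K : ℝ) * (s / (s - 1) * ‖u‖)) :=
      mul_le_mul_of_nonneg_left hL1 ha
    linarith [hc, hid, herr, herr2, hprod, hL2, hsup]
  -- fAsymp 0 = 0
  have hA0 : fAsymp 0 = 0 := by
    rw [hfAsymp]
    simp only [smul_zero, sub_self, zero_div]
    exact ciSup_const
  have hlow : ∀ u, f x ≤ f u + fAsymp (x - u) := by
    intro u
    have h := key u (x - u)
    rw [add_sub_cancel] at h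
    linarith
  refine le_antisymm ?_ (le_ciInf hlow)
  have h := ciInf_le (f := fun u => f u + fAsymp (x - u))
    ⟨f x, by rintro _ ⟨u, rfl⟩; exact hlow u⟩ x
  simpa [hA0] using h
end

section
/- Let n, m ≥ 1, let L : ℝⁿ → ℝ be convex and Lipschitz continuous with asymptotic function L'∞(d) = sup_{s>0} (L(s·d) − L(0))/s, and let u_1, …, u_m ∈ ℝⁿ and a_1, …, a_m ∈ ℝ. Define the initial data J : ℝⁿ → ℝ by J(u) = min_{i∈{1,…,m}} ( L'∞(u − u_i) + a_i ). Then for every x ∈ ℝⁿ and every t > 0, the Lax–Oleinik formula with Lagrangian L equals the neural network function f₁: inf_{u ∈ ℝⁿ} ( J(u) + t·L((x − u)/t) ) = min_{i∈{1,…,m}} ( t·L((x − u_i)/t) + a_i ). -/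
open NNReal

lemma lip_abs_sub {n : ℕ} {L : EuclideanSpace ℝ (Fin n) → ℝ} {K : ℝ≥0}
    (hlip : LipschitzWith K L) (a b : EuclideanSpace ℝ (Fin n)) :
    |L a - L b| ≤ K * ‖a - b‖ := by
  have := hlip.dist_le_mul a b
  rwa [Real.dist_eq, dist_eq_norm] at this

lemma key_ineq {n : ℕ} (L : EuclideanSpace ℝ (Fin n) → ℝ)
    (hconv : ConvexOn ℝ Set.univ L) (K : ℝ≥0) (hlip : LipschitzWith K L)
    (t : ℝ) (ht : 0 < t) (z d : EuclideanSpace ℝ (Fin n)) :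
    t * L (z + t⁻¹ • d) ≤ t * L z + ⨆ s : {s : ℝ // 0 < s}, (L (s.1 • d) - L 0) / s.1 := by
  haveI : Nonempty {s : ℝ // 0 < s} := ⟨⟨1, one_pos⟩⟩
  have hbdd : BddAbove (Set.range fun s : {s : ℝ // 0 < s} => (L (s.1 • d) - L 0) / s.1) := by
    refine ⟨K * ‖d‖, ?_⟩
    rintro _ ⟨⟨s, hs⟩, rfl⟩
    have h1 : |L (s • d) - L 0| ≤ K * (s * ‖d‖) := by
      have := lip_abs_sub hlip (s • d) 0
      simpa [norm_smul, abs_of_pos hs] using this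
    have h2 : L (s • d) - L 0 ≤ K * (s * ‖d‖) := (le_abs_self _).trans h1
    rw [div_le_iff₀ hs]
    calc L (s • d) - L 0 ≤ K * (s * ‖d‖) := h2
      _ = K * ‖d‖ * s := by ring
  -- convexity of the restriction to the line
  have hg : ConvexOn ℝ Set.univ (fun r : ℝ => L (z + r • d)) := by
    have h := hconv.comp_affineMap (AffineMap.lineMap z (z + d) : ℝ →ᵃ[ℝ] _)
    have heq : (fun r : ℝ => L (z + r • d)) =
        L ∘ (AffineMap.lineMap z (z + d) : ℝ →ᵃ[ℝ] _) := by
      funext r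
      simp only [Function.comp_apply, AffineMap.lineMap_apply, vsub_eq_sub, vadd_eq_add,
        add_sub_cancel_left]
      rw [add_comm]
    rw [heq]
    simpa using h
  have hslope : ∀ s : ℝ, t⁻¹ ≤ s →
      t * (L (z + t⁻¹ • d) - L z) ≤ (L (z + s • d) - L z) / s := by
    intro s hs
    have hs0 : (0:ℝ) < s := lt_of_lt_of_le (inv_pos.mpr ht) hs
    have h := hg.secant_mono (a := 0) (x := t⁻¹) (y := s) trivial trivial trivial
      (by positivity) (by positivity) hs
    simp only [zero_smul, add_zero, sub_zero] at h
    rw [div_eq_mul_inv, inv_inv] at h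
    rw [mul_comm]
    exact h
  refine le_of_forall_pos_le_add ?_
  intro ε hε
  set S := ⨆ s : {s : ℝ // 0 < s}, (L (s.1 • d) - L 0) / s.1 with hS
  set s : ℝ := max t⁻¹ (2 * K * ‖z‖ / ε + 1) with hsdef
  have hs1 : t⁻¹ ≤ s := le_max_left _ _
  have hs0 : (0:ℝ) < s := lt_of_lt_of_le (inv_pos.mpr ht) hs1
  have hsε : 2 * K * ‖z‖ / s ≤ ε := by
    have h2 : 2 * K * ‖z‖ / ε ≤ s - 1 := by
      have := le_max_right t⁻¹ (2 * K * ‖z‖ / ε + 1)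
      linarith
    have hnum : (0:ℝ) ≤ 2 * K * ‖z‖ := by positivity
    rw [div_le_iff₀ hs0]
    rw [div_le_iff₀ hε] at h2
    nlinarith
  have hterm : (L (s • d) - L 0) / s ≤ S :=
    le_ciSup hbdd (⟨s, hs0⟩ : {s : ℝ // 0 < s})
  have hcmp : (L (z + s • d) - L z) / s ≤ (L (s • d) - L 0) / s + 2 * K * ‖z‖ / s := by
    have h1 : |L (z + s • d) - L (s • d)| ≤ K * ‖z‖ := by
      have := lip_abs_sub hlip (z + s • d) (s • d)
      simpa using this
    have h2 : |L z - L 0| ≤ K * ‖z‖ := by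
      have := lip_abs_sub hlip z 0
      simpa using this
    rw [← add_div, div_le_div_iff_of_pos_right hs0]
    have := abs_le.mp h1
    have := abs_le.mp h2
    cases abs_le.mp h1 with
    | intro a b => cases abs_le.mp h2 with
      | intro c e => linarith
  have := hslope s hs1
  have : t * (L (z + t⁻¹ • d) - L z) ≤ S + ε := by
    calc t * (L (z + t⁻¹ • d) - L z) ≤ (L (z + s • d) - L z) / s := hslope s hs1
      _ ≤ (L (s • d) - L 0) / s + 2 * K * ‖z‖ / s := hcmp
      _ ≤ S + ε := add_le_add hterm hsε
  linarith [this]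

/-- For initial data `J u = min_i (L∞ (u - u_i) + a_i)`, the Lax--Oleinik formula
with Lagrangian `L` equals the first neural network architecture `f₁`. -/
theorem laxOleinik_eq_firstArchitecture (n m : ℕ) (hn : 1 ≤ n) (hm : 1 ≤ m)
    (L : EuclideanSpace ℝ (Fin n) → ℝ)
    (hconv : ConvexOn ℝ Set.univ L) (K : ℝ≥0) (hlip : LipschitzWith K L)
    (LAsymp : EuclideanSpace ℝ (Fin n) → ℝ)
    (hLAsymp : ∀ d, LAsymp d = ⨆ s : {s : ℝ // 0 < s}, (L (s.1 • d) - L 0) / s.1)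
    (u : Fin m → EuclideanSpace ℝ (Fin n)) (a : Fin m → ℝ)
    (J : EuclideanSpace ℝ (Fin n) → ℝ)
    (hJ : ∀ v, J v = ⨅ i : Fin m, (LAsymp (v - u i) + a i))
    (x : EuclideanSpace ℝ (Fin n)) (t : ℝ) (ht : 0 < t) :
    (⨅ v : EuclideanSpace ℝ (Fin n), (J v + t * L (t⁻¹ • (x - v)))) =
      ⨅ i : Fin m, (t * L (t⁻¹ • (x - u i)) + a i) := by
  haveI : Nonempty (Fin m) := Fin.pos_iff_nonempty.mp hm
  haveI : Nonempty {s : ℝ // 0 < s} := ⟨⟨1, one_pos⟩⟩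
  set c : Fin m → ℝ := fun i => t * L (t⁻¹ • (x - u i)) + a i with hc
  -- key pointwise bound
  have hkey : ∀ (v : EuclideanSpace ℝ (Fin n)) (i : Fin m),
      t * L (t⁻¹ • (x - u i)) ≤ LAsymp (v - u i) + t * L (t⁻¹ • (x - v)) := by
    intro v i
    have h := key_ineq L hconv K hlip t ht (t⁻¹ • (x - v)) (v - u i)
    rw [← hLAsymp] at h
    have heq : t⁻¹ • (x - v) + t⁻¹ • (v - u i) = t⁻¹ • (x - u i) := by
      rw [← smul_add, sub_add_sub_cancel]
    rw [heq] at h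
    linarith
  have hpt : ∀ v : EuclideanSpace ℝ (Fin n),
      (⨅ i, c i) ≤ J v + t * L (t⁻¹ • (x - v)) := by
    intro v
    rw [hJ]
    obtain ⟨i, hi⟩ := exists_eq_ciInf_of_finite (f := fun i : Fin m => LAsymp (v - u i) + a i)
    calc (⨅ i, c i) ≤ c i := ciInf_le (Set.Finite.bddBelow (Set.finite_range _)) i
      _ ≤ (LAsymp (v - u i) + a i) + t * L (t⁻¹ • (x - v)) := by
          have := hkey v i
          simp only [hc]
          linarith
      _ = (⨅ i : Fin m, (LAsymp (v - u i) + a i)) + t * L (t⁻¹ • (x - v)) := by rw [hi]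
  apply le_antisymm
  · apply le_ciInf
    intro i
    have hb : BddBelow (Set.range fun v : EuclideanSpace ℝ (Fin n) =>
        J v + t * L (t⁻¹ • (x - v))) := by
      refine ⟨⨅ i, c i, ?_⟩
      rintro _ ⟨v, rfl⟩
      exact hpt v
    calc (⨅ v, J v + t * L (t⁻¹ • (x - v))) ≤ J (u i) + t * L (t⁻¹ • (x - u i)) :=
          ciInf_le hb (u i)
      _ ≤ c i := by
          have hJu : J (u i) ≤ a i := by
            rw [hJ]
            have h0 : LAsymp (u i - u i) + a i = a i := by
              have : LAsymp (0 : EuclideanSpace ℝ (Fin n)) = 0 := by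
                rw [hLAsymp]
                simp [ciSup_const]
              rw [sub_self, this, zero_add]
            calc (⨅ j : Fin m, (LAsymp (u i - u j) + a j)) ≤ LAsymp (u i - u i) + a i :=
                  ciInf_le (Set.Finite.bddBelow (Set.finite_range _)) i
              _ = a i := h0
          simp only [hc]
          linarith
  · exact le_ciInf hpt
end

section
/- Let n, m ≥ 1, let v_1, …, v_m ∈ ℝⁿ and b_1, …, b_m ∈ ℝ satisfy assumption (H): there exists a convex function ℓ : ℝⁿ → ℝ with ℓ(v_i) = b_i for all i ∈ {1,…,m}. Define H : ℝⁿ → ℝ by H(p) = max_{i∈{1,…,m}} ( ⟨p, v_i⟩ − b_i ). Then for every v in the convex hull of {v_1, …, v_m}, the Fenchel–Legendre transform of H at v satisfies sup_{p ∈ ℝⁿ} ( ⟨p, v⟩ − H(p) ) = min { Σ_{i=1}^m α_i b_i : α ∈ Λ_m, Σ_{i=1}^m α_i v_i = v }, where Λ_m is the unit simplex; in particular this supremum is finite and the minimum on the right-hand side is attained. -/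
open RealInnerProductSpace

lemma my_mem_convexHull_range_iff {E : Type*} [NormedAddCommGroup E] [NormedSpace ℝ E]
    {m : ℕ} (f : Fin m → E) (x : E) :
    x ∈ convexHull ℝ (Set.range f) ↔ ∃ α ∈ stdSimplex ℝ (Fin m), ∑ i, α i • f i = x := by
  constructor
  · intro hx
    have himg : convexHull ℝ (Set.range f) ⊆
        (fun α : Fin m → ℝ => ∑ i, α i • f i) '' stdSimplex ℝ (Fin m) := by
      apply convexHull_min
      · rintro y ⟨i, rfl⟩
        refine ⟨fun j => if i = j then 1 else 0, ite_eq_mem_stdSimplex ℝ i, ?_⟩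
        simp [ite_smul]
      · have := (convex_stdSimplex ℝ (Fin m)).linear_image
          (Fintype.linearCombination ℝ f)
        exact this
    obtain ⟨α, hα, h⟩ := himg hx
    exact ⟨α, hα, h⟩
  · rintro ⟨α, ⟨h0, h1⟩, rfl⟩
    exact (convex_convexHull ℝ _).sum_mem (fun i _ => h0 i) h1
      (fun i _ => subset_convexHull ℝ _ ⟨i, rfl⟩)

/-- For `H p = max_i (⟨p, v_i⟩ - b_i)` with data satisfying assumption (H), the
Fenchel--Legendre transform of `H` at a point `v` of the convex hull of the `v_i`
is finite, equals the optimal value of the linear program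
`min { Σ α_i b_i : α ∈ Λ_m, Σ α_i v_i = v }`, and this minimum is attained. -/
theorem fenchel_of_piecewiseAffine (n m : ℕ) (hn : 1 ≤ n) (hm : 1 ≤ m)
    (V : Fin m → EuclideanSpace ℝ (Fin n)) (b : Fin m → ℝ)
    (ℓ : EuclideanSpace ℝ (Fin n) → ℝ) (hℓconv : ConvexOn ℝ Set.univ ℓ)
    (hℓ : ∀ i, ℓ (V i) = b i)
    (H : EuclideanSpace ℝ (Fin n) → ℝ)
    (hH : ∀ p, H p = ⨆ i : Fin m, (⟪p, V i⟫ - b i))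
    (v : EuclideanSpace ℝ (Fin n)) (hv : v ∈ convexHull ℝ (Set.range V)) :
    BddAbove (Set.range fun p : EuclideanSpace ℝ (Fin n) => ⟪p, v⟫ - H p) ∧
    (∃ α ∈ stdSimplex ℝ (Fin m), (∑ i, α i • V i) = v ∧
        (∑ i, α i * b i) =
          sInf {c : ℝ | ∃ α ∈ stdSimplex ℝ (Fin m),
            (∑ i, α i • V i) = v ∧ c = ∑ i, α i * b i}) ∧
    (⨆ p : EuclideanSpace ℝ (Fin n), (⟪p, v⟫ - H p)) =
      sInf {c : ℝ | ∃ α ∈ stdSimplex ℝ (Fin m),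
        (∑ i, α i • V i) = v ∧ c = ∑ i, α i * b i} := by
  classical
  haveI : Nonempty (Fin m) := Fin.pos_iff_nonempty.mp hm
  set S : Set ℝ := {c : ℝ | ∃ α ∈ stdSimplex ℝ (Fin m),
      (∑ i, α i • V i) = v ∧ c = ∑ i, α i * b i} with hSdef
  obtain ⟨α₀, hα₀, hα₀v⟩ := (my_mem_convexHull_range_iff V v).mp hv
  have hSne : S.Nonempty := ⟨∑ i, α₀ i * b i, α₀, hα₀, hα₀v, rfl⟩
  -- weak duality
  have key : ∀ p, ∀ c ∈ S, ⟪p, v⟫ - H p ≤ c := by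
    rintro p c ⟨α, ⟨h0, h1⟩, hαv, rfl⟩
    have hHp : ∀ i, ⟪p, V i⟫ - b i ≤ H p := by
      intro i
      rw [hH p]
      exact le_ciSup (f := fun i : Fin m => ⟪p, V i⟫ - b i) (Set.finite_range _).bddAbove i
    have hinner : ⟪p, v⟫ = ∑ i, α i * ⟪p, V i⟫ := by
      rw [← hαv, inner_sum]
      simp only [real_inner_smul_right]
    calc ⟪p, v⟫ - H p = ∑ i, α i * ⟪p, V i⟫ - (∑ i, α i) * H p := by
          rw [hinner, h1, one_mul]
      _ = ∑ i, α i * (⟪p, V i⟫ - H p) := by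
          rw [Finset.sum_mul, ← Finset.sum_sub_distrib]
          simp [mul_sub]
      _ ≤ ∑ i, α i * b i := by
          refine Finset.sum_le_sum fun i _ => mul_le_mul_of_nonneg_left ?_ (h0 i)
          have := hHp i; linarith
  -- compactness of the feasible values
  have hKcont : Continuous fun α : Fin m → ℝ => ∑ i, α i • V i :=
    continuous_finset_sum _ fun i _ => (continuous_apply i).smul continuous_const
  have hKcompact : IsCompact (stdSimplex ℝ (Fin m) ∩ {α | ∑ i, α i • V i = v}) :=
    (isCompact_stdSimplex ℝ (Fin m)).inter_right (isClosed_eq hKcont continuous_const)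
  have hSeq : S = (fun α : Fin m → ℝ => ∑ i, α i * b i) ''
      (stdSimplex ℝ (Fin m) ∩ {α | ∑ i, α i • V i = v}) := by
    ext c
    constructor
    · rintro ⟨α, hα, hαv, rfl⟩; exact ⟨α, ⟨hα, hαv⟩, rfl⟩
    · rintro ⟨α, ⟨hα, hαv⟩, rfl⟩; exact ⟨α, hα, hαv, rfl⟩
  have hScompact : IsCompact S := by
    rw [hSeq]
    exact hKcompact.image (continuous_finset_sum _ fun i _ =>
      (continuous_apply i).mul continuous_const)
  have hmin : sInf S ∈ S := hScompact.sInf_mem hSne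
  have hbdd : BddAbove (Set.range fun p : EuclideanSpace ℝ (Fin n) => ⟪p, v⟫ - H p) := by
    refine ⟨sInf S, ?_⟩
    rintro x ⟨p, rfl⟩
    exact key p _ hmin
  refine ⟨hbdd, ?_, ?_⟩
  · obtain ⟨α, hα, hαv, heq⟩ := hmin
    exact ⟨α, hα, hαv, heq.symm⟩
  · refine le_antisymm (ciSup_le fun p => key p _ hmin) ?_
    refine le_of_forall_pos_le_add fun ε hε => ?_
    -- separation argument
    set W : Fin m → (EuclideanSpace ℝ (Fin n)) × ℝ := fun i => (V i, b i) with hW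
    have hCcompact : IsCompact (convexHull ℝ (Set.range W)) :=
      (Set.finite_range W).isCompact_convexHull (𝕜 := ℝ)
    have hx0 : ((v, sInf S - ε) : (EuclideanSpace ℝ (Fin n)) × ℝ) ∉
        convexHull ℝ (Set.range W) := by
      intro hmem
      obtain ⟨α, hα, hsum⟩ := (my_mem_convexHull_range_iff W _).mp hmem
      have h1 : ∑ i, α i • V i = v := by
        have := congrArg Prod.fst hsum
        simpa [hW, Prod.fst_sum] using this
      have h2 : ∑ i, α i * b i = sInf S - ε := by
        have := congrArg Prod.snd hsum
        simpa [hW, Prod.snd_sum, smul_eq_mul] using this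
      have : sInf S ≤ sInf S - ε := by
        rw [← h2]
        exact csInf_le hScompact.bddBelow ⟨α, hα, h1, rfl⟩
      linarith
    obtain ⟨f, u, hfu, hux⟩ := geometric_hahn_banach_closed_point
      (convex_convexHull ℝ _) hCcompact.isClosed hx0
    set q : EuclideanSpace ℝ (Fin n) :=
      (InnerProductSpace.toDual ℝ _).symm
        (f.comp (ContinuousLinearMap.inl ℝ (EuclideanSpace ℝ (Fin n)) ℝ)) with hq
    set s : ℝ := f (0, 1) with hs
    have hf : ∀ (x : EuclideanSpace ℝ (Fin n)) (t : ℝ), f (x, t) = ⟪q, x⟫ + t * s := by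
      intro x t
      have hqx : ⟪q, x⟫ = f (x, 0) := by
        rw [hq, InnerProductSpace.toDual_symm_apply]; rfl
      have hxt : ((x, t) : (EuclideanSpace ℝ (Fin n)) × ℝ)
          = (x, (0:ℝ)) + t • ((0 : EuclideanSpace ℝ (Fin n)), (1:ℝ)) := by
        simp [Prod.ext_iff]
      rw [hxt, map_add, map_smul, hqx, smul_eq_mul, hs]
    -- (v, sInf S) is in the hull
    have hvS : ((v, sInf S) : (EuclideanSpace ℝ (Fin n)) × ℝ) ∈ convexHull ℝ (Set.range W) := by
      obtain ⟨α, hα, hαv, heq⟩ := hmin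
      refine (my_mem_convexHull_range_iff W _).mpr ⟨α, hα, ?_⟩
      rw [Prod.ext_iff]
      constructor
      · simpa [hW, Prod.fst_sum] using hαv
      · simpa [hW, Prod.snd_sum, smul_eq_mul] using heq.symm
    have hslt : s < 0 := by
      have h1 := (hfu _ hvS).trans hux
      rw [hf, hf] at h1
      nlinarith
    set β : ℝ := (-s)⁻¹ with hβ
    have hβpos : 0 < β := by
      rw [hβ]
      exact inv_pos.mpr (by linarith)
    have hsne : s ≠ 0 := ne_of_lt hslt
    have hβs : β * s = -1 := by
      rw [hβ]
      field_simp
    set p : EuclideanSpace ℝ (Fin n) := β • q with hp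
    have hpx : ∀ x : EuclideanSpace ℝ (Fin n), ⟪p, x⟫ = β * ⟪q, x⟫ := fun x => by
      rw [hp, real_inner_smul_left]
    have hHle : H p ≤ ⟪p, v⟫ - (sInf S - ε) := by
      rw [hH]
      refine ciSup_le fun i => ?_
      have hi : f (V i, b i) < f (v, sInf S - ε) :=
        (hfu _ (subset_convexHull ℝ _ ⟨i, rfl⟩)).trans hux
      rw [hf, hf] at hi
      rw [hpx, hpx]
      have h2 := mul_lt_mul_of_pos_left hi hβpos
      rw [mul_add, mul_add] at h2
      have e1 : β * (b i * s) = -b i := by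
        rw [show β * (b i * s) = (β * s) * b i by ring, hβs]; ring
      have e2 : β * ((sInf S - ε) * s) = -(sInf S - ε) := by
        rw [show β * ((sInf S - ε) * s) = (β * s) * (sInf S - ε) by ring, hβs]; ring
      rw [e1, e2] at h2
      linarith
    have hle : sInf S - ε ≤ ⟪p, v⟫ - H p := by linarith
    have := le_ciSup hbdd p
    calc sInf S ≤ (⟪p, v⟫ - H p) + ε := by linarith
      _ ≤ (⨆ p : EuclideanSpace ℝ (Fin n), (⟪p, v⟫ - H p)) + ε := by linarith
end

section
/- Let n, m ≥ 1, let v_1, …, v_m ∈ ℝⁿ and b_1, …, b_m ∈ ℝ satisfy assumption (H): there exists a convex function ℓ : ℝⁿ → ℝ with ℓ(v_i) = b_i for all i ∈ {1,…,m}. Define H : ℝⁿ → ℝ by H(p) = max_{i∈{1,…,m}} ( ⟨p, v_i⟩ − b_i ). Then for every k ∈ {1,…,m}, the Fenchel–Legendre transform of H at v_k equals b_k: sup_{p ∈ ℝⁿ} ( ⟨p, v_k⟩ − H(p) ) = b_k. -/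
open RealInnerProductSpace

lemma exists_subgradient {E : Type*} [NormedAddCommGroup E] [InnerProductSpace ℝ E]
    [FiniteDimensional ℝ E] (ℓ : E → ℝ) (h : ConvexOn ℝ Set.univ ℓ) (x₀ : E) :
    ∃ p : E, ∀ x, ⟪p, x - x₀⟫ ≤ ℓ x - ℓ x₀ := by
  have hcont : Continuous ℓ := h.locallyLipschitz.continuous
  set S : Set (E × ℝ) := {q | ℓ q.1 < q.2} with hS
  have hopen : IsOpen S := isOpen_lt (hcont.comp continuous_fst) continuous_snd
  have hconv : Convex ℝ S := by
    rintro ⟨x, t⟩ hx ⟨y, s⟩ hy a c ha hc hac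
    simp only [hS, Set.mem_setOf_eq] at *
    have h1 : ℓ (a • x + c • y) ≤ a * ℓ x + c * ℓ y :=
      h.2 (Set.mem_univ x) (Set.mem_univ y) ha hc hac
    have h2 : a * ℓ x + c * ℓ y < a * t + c * s := by
      rcases eq_or_lt_of_le ha with rfl | ha'
      · simp only [zero_add] at hac; subst hac
        simpa using hy
      · rcases eq_or_lt_of_le hc with rfl | hc'
        · rw [add_zero] at hac; subst hac
          simpa using hx
        · exact add_lt_add (by nlinarith) (by nlinarith)
    calc ℓ ((a • (x, t) + c • (y, s)).1) = ℓ (a • x + c • y) := rfl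
      _ ≤ a * ℓ x + c * ℓ y := h1
      _ < a * t + c * s := h2
      _ = (a • (x, t) + c • (y, s)).2 := rfl
  have hx₀ : ((x₀, ℓ x₀) : E × ℝ) ∉ S := by simp [hS]
  obtain ⟨f, hf⟩ := geometric_hahn_banach_open_point hconv hopen hx₀
  set c : ℝ := f (0, 1) with hc
  set g : E → ℝ := fun x => f (x, 0) with hg
  have key : ∀ x t, ℓ x < t → g x + t * c < g x₀ + ℓ x₀ * c := by
    intro x t hxt
    have := hf (x, t) hxt
    have e1 : ((x, t) : E × ℝ) = (x, 0) + t • (0, 1) := by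
      simp [Prod.ext_iff]
    have e2 : ((x₀, ℓ x₀) : E × ℝ) = (x₀, 0) + (ℓ x₀) • (0, 1) := by
      simp [Prod.ext_iff]
    rw [e1, e2] at this
    simp only [map_add, map_smul, smul_eq_mul] at this
    simpa [hg, hc, mul_comm] using this
  have hcneg : c < 0 := by
    have := key x₀ (ℓ x₀ + 1) (by linarith)
    nlinarith
  have key2 : ∀ x, g x + ℓ x * c ≤ g x₀ + ℓ x₀ * c := by
    intro x
    refine le_of_forall_pos_le_add fun ε hε => ?_
    have hε' : 0 < ε / (-c) := div_pos hε (by linarith)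
    have := key x (ℓ x + ε / (-c)) (by linarith)
    have hc0 : c ≠ 0 := hcneg.ne
    have hcc : (ε / (-c)) * c = -ε := by
      rw [div_mul_eq_mul_div, div_neg, mul_div_cancel_right₀ _ hc0]
    nlinarith [this]
  set G : E →L[ℝ] ℝ := f.comp (ContinuousLinearMap.inl ℝ E ℝ) with hG
  have hGx : ∀ x, G x = g x := fun x => rfl
  refine ⟨(InnerProductSpace.toDual ℝ E).symm ((-c)⁻¹ • G), fun x => ?_⟩
  rw [InnerProductSpace.toDual_symm_apply]
  have h1 := key2 x
  have h2 : g x - g x₀ ≤ (ℓ x - ℓ x₀) * (-c) := by nlinarith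
  have h3 : (-c)⁻¹ * (g x - g x₀) ≤ ℓ x - ℓ x₀ := by
    rw [inv_mul_le_iff₀ (by linarith : (0:ℝ) < -c)]
    linarith [h2]
  calc ((-c)⁻¹ • G) (x - x₀) = (-c)⁻¹ * (g x - g x₀) := by
        simp [hGx, map_sub, mul_sub]
    _ ≤ ℓ x - ℓ x₀ := h3

/-- For `H p = max_i (⟨p, v_i⟩ - b_i)` with data satisfying assumption (H), the
Fenchel--Legendre transform of `H` at `v_k` equals `b_k`. -/
theorem fenchel_at_vk (n m : ℕ) (hn : 1 ≤ n) (hm : 1 ≤ m)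
    (V : Fin m → EuclideanSpace ℝ (Fin n)) (b : Fin m → ℝ)
    (ℓ : EuclideanSpace ℝ (Fin n) → ℝ) (hℓconv : ConvexOn ℝ Set.univ ℓ)
    (hℓ : ∀ i, ℓ (V i) = b i)
    (H : EuclideanSpace ℝ (Fin n) → ℝ)
    (hH : ∀ p, H p = ⨆ i : Fin m, (⟪p, V i⟫ - b i))
    (k : Fin m) :
    (⨆ p : EuclideanSpace ℝ (Fin n), (⟪p, V k⟫ - H p)) = b k := by
  haveI : Nonempty (Fin m) := ⟨⟨0, hm⟩⟩
  have hub : ∀ p : EuclideanSpace ℝ (Fin n), ⟪p, V k⟫ - H p ≤ b k := by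
    intro p
    have : ⟪p, V k⟫ - b k ≤ H p := by
      rw [hH]
      exact le_ciSup (f := fun i : Fin m => ⟪p, V i⟫ - b i) (Set.Finite.bddAbove (Set.finite_range _)) k
    linarith
  -- subgradient of ℓ at V k
  obtain ⟨p, hp⟩ := exists_subgradient ℓ hℓconv (V k)
  have hlb : b k ≤ ⟪p, V k⟫ - H p := by
    have hHp : H p ≤ ⟪p, V k⟫ - b k := by
      rw [hH]
      refine ciSup_le fun i => ?_
      have := hp (V i)
      rw [inner_sub_right, hℓ i, hℓ k] at this
      linarith
    linarith
  refine le_antisymm (ciSup_le hub) ?_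
  exact hlb.trans (le_ciSup ⟨b k, Set.forall_mem_range.2 hub⟩ p)
end

section
/- Let n, m ≥ 1, let J : ℝⁿ → ℝ be concave, and let v_1, …, v_m ∈ ℝⁿ and b_1, …, b_m ∈ ℝ satisfy assumption (H): there exists a convex function ℓ : ℝⁿ → ℝ with ℓ(v_i) = b_i for all i ∈ {1,…,m}. Define H : ℝⁿ → ℝ by H(p) = max_{i∈{1,…,m}} ( ⟨p, v_i⟩ − b_i ) and H*(v) = sup_{p ∈ ℝⁿ} ( ⟨p, v⟩ − H(p) ) for v in the convex hull of {v_1, …, v_m} (where this supremum is finite). Then for every x ∈ ℝⁿ and every t > 0, the Lax–Oleinik formula equals the neural network function f₂: inf_{v ∈ convexHull{v_1,…,v_m}} ( J(x − t·v) + t·H*(v) ) = min_{i∈{1,…,m}} ( J(x − t·v_i) + t·b_i ). -/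
open RealInnerProductSpace

/-- Extract convex combination weights for a member of the convex hull of a finite range. -/
lemma exists_fin_weights {E : Type*} [AddCommGroup E] [Module ℝ E] {m : ℕ} (z : Fin m → E)
    {v : E} (hv : v ∈ convexHull ℝ (Set.range z)) :
    ∃ w : Fin m → ℝ, (∀ i, 0 ≤ w i) ∧ ∑ i, w i = 1 ∧ ∑ i, w i • z i = v := by
  have hsub : convexHull ℝ (Set.range z) ⊆
      {v | ∃ w : Fin m → ℝ, (∀ i, 0 ≤ w i) ∧ ∑ i, w i = 1 ∧ ∑ i, w i • z i = v} := by
    apply convexHull_min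
    · rintro _ ⟨i, rfl⟩
      exact ⟨fun j => if j = i then 1 else 0,
        fun j => by by_cases h : j = i <;> simp [h], by simp, by simp⟩
    · rintro u ⟨w, hw0, hw1, hwz⟩ v ⟨w', hw'0, hw'1, hw'z⟩ a c ha hc hac
      refine ⟨fun i => a * w i + c * w' i,
        fun i => by have := hw0 i; have := hw'0 i; positivity, ?_, ?_⟩
      · simp [Finset.sum_add_distrib, ← Finset.mul_sum, hw1, hw'1, hac]
      · simp only [add_smul, mul_smul, Finset.sum_add_distrib, ← Finset.smul_sum, hwz, hw'z]
  exact hsub hv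


/-- For concave initial data `J` and piecewise-affine convex Hamiltonian
`H p = max_i (⟨p, v_i⟩ - b_i)` satisfying assumption (H), the Lax--Oleinik
formula equals the second neural network architecture `f₂`. -/
theorem laxOleinik_eq_secondArchitecture (n m : ℕ) (hn : 1 ≤ n) (hm : 1 ≤ m)
    (J : EuclideanSpace ℝ (Fin n) → ℝ) (hJ : ConcaveOn ℝ Set.univ J)
    (V : Fin m → EuclideanSpace ℝ (Fin n)) (b : Fin m → ℝ)
    (ℓ : EuclideanSpace ℝ (Fin n) → ℝ) (hℓconv : ConvexOn ℝ Set.univ ℓ)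
    (hℓ : ∀ i, ℓ (V i) = b i)
    (H : EuclideanSpace ℝ (Fin n) → ℝ)
    (hH : ∀ p, H p = ⨆ i : Fin m, (⟪p, V i⟫ - b i))
    (Hstar : EuclideanSpace ℝ (Fin n) → ℝ)
    (hHstar : ∀ v ∈ convexHull ℝ (Set.range V),
      Hstar v = ⨆ p : EuclideanSpace ℝ (Fin n), (⟪p, v⟫ - H p))
    (x : EuclideanSpace ℝ (Fin n)) (t : ℝ) (ht : 0 < t) :
    (⨅ v : (convexHull ℝ (Set.range V) : Set (EuclideanSpace ℝ (Fin n))),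
        (J (x - t • (v : EuclideanSpace ℝ (Fin n))) + t * Hstar v)) =
      ⨅ i : Fin m, (J (x - t • V i) + t * b i) := by
  classical
  haveI : Nonempty (Fin m) := ⟨⟨0, hm⟩⟩
  -- H p dominates each affine piece
  have hHge : ∀ (p : EuclideanSpace ℝ (Fin n)) (i : Fin m), ⟪p, V i⟫ - b i ≤ H p := by
    intro p i
    rw [hH p]
    exact le_ciSup (f := fun i : Fin m => ⟪p, V i⟫ - b i) (Set.finite_range _).bddAbove i
  -- upper bound for terms of the Fenchel sup
  have hterm : ∀ (w : Fin m → ℝ), (∀ i, 0 ≤ w i) → ∑ i, w i = 1 →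
      ∀ (v : EuclideanSpace ℝ (Fin n)), ∑ i, w i • V i = v →
      ∀ p : EuclideanSpace ℝ (Fin n), ⟪p, v⟫ - H p ≤ ∑ i, w i * b i := by
    intro w hw0 hw1 v hwv p
    have h1 : ⟪p, v⟫ = ∑ i, w i * ⟪p, V i⟫ := by
      rw [← hwv, inner_sum]
      exact Finset.sum_congr rfl fun i _ => real_inner_smul_right _ _ _
    have h2 : ∑ i, w i * ⟪p, V i⟫ ≤ ∑ i, w i * (H p + b i) :=
      Finset.sum_le_sum fun i _ =>
        mul_le_mul_of_nonneg_left (by linarith [hHge p i]) (hw0 i)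
    have h3 : ∑ i, w i * (H p + b i) = H p + ∑ i, w i * b i := by
      have h : ∑ i, w i * (H p + b i) = ∑ i, (w i * H p + w i * b i) :=
        Finset.sum_congr rfl fun i _ => by ring
      rw [h, Finset.sum_add_distrib, ← Finset.sum_mul, hw1, one_mul]
    rw [h1]
    linarith
  have hVK : ∀ i, V i ∈ convexHull ℝ (Set.range V) :=
    fun i => subset_convexHull ℝ _ (Set.mem_range_self i)
  -- key claim: the pair (v, Hstar v) is a convex combination of the (V i, b i)
  have main : ∀ v ∈ convexHull ℝ (Set.range V), ∃ μ : Fin m → ℝ,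
      (∀ i, 0 ≤ μ i) ∧ ∑ i, μ i = 1 ∧
      ∑ i, μ i • V i = v ∧ ∑ i, μ i * b i = Hstar v := by
    intro v hv
    obtain ⟨w, hw0, hw1, hwv⟩ := exists_fin_weights V hv
    have hub : ∀ p : EuclideanSpace ℝ (Fin n), ⟪p, v⟫ - H p ≤ ∑ i, w i * b i :=
      hterm w hw0 hw1 v hwv
    have hbdd : BddAbove (Set.range fun p : EuclideanSpace ℝ (Fin n) => ⟪p, v⟫ - H p) := by
      refine ⟨∑ i, w i * b i, ?_⟩
      rintro y ⟨p, rfl⟩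
      exact hub p
    have hstar_le : Hstar v ≤ ∑ i, w i * b i := by
      rw [hHstar v hv]; exact ciSup_le hub
    have hstar_ge : ∀ p : EuclideanSpace ℝ (Fin n), ⟪p, v⟫ - H p ≤ Hstar v := by
      intro p; rw [hHstar v hv]; exact le_ciSup hbdd p
    have hmem : ((v, Hstar v) : EuclideanSpace ℝ (Fin n) × ℝ) ∈
        convexHull ℝ (Set.range fun i => ((V i, b i) : EuclideanSpace ℝ (Fin n) × ℝ)) := by
      by_contra hnot
      obtain ⟨f, u, hfu, huf⟩ := geometric_hahn_banach_closed_point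
        (convex_convexHull ℝ _) (Set.Finite.isClosed_convexHull ℝ (Set.finite_range _)) hnot
      set α : ℝ := f (0, 1) with hα
      have hf : ∀ (y : EuclideanSpace ℝ (Fin n)) (s : ℝ), f (y, s) = f (y, 0) + s * α := by
        intro y s
        have hys : ((y, s) : EuclideanSpace ℝ (Fin n) × ℝ)
            = (y, (0:ℝ)) + s • ((0 : EuclideanSpace ℝ (Fin n)), (1:ℝ)) := by
          simp [Prod.ext_iff]
        rw [hys, map_add, map_smul, smul_eq_mul, hα]
      have hfi : ∀ i, f (V i, 0) + b i * α < u := by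
        intro i
        have h := hfu _ (subset_convexHull ℝ _ (Set.mem_range_self i))
        rwa [hf] at h
      have hfv : u < f (v, 0) + Hstar v * α := by
        have h := huf; rwa [hf] at h
      have hfsum : f (v, 0) = ∑ i, w i * f (V i, 0) := by
        have hsum0 : ((v, (0:ℝ)) : EuclideanSpace ℝ (Fin n) × ℝ)
            = ∑ i, w i • ((V i, (0:ℝ)) : EuclideanSpace ℝ (Fin n) × ℝ) := by
          refine Prod.ext_iff.mpr ⟨?_, ?_⟩
          · simp [Prod.fst_sum, hwv]
          · simp [Prod.snd_sum]
        rw [hsum0, map_sum]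
        refine Finset.sum_congr rfl fun i _ => ?_
        rw [map_smul, smul_eq_mul]
      rcases lt_trichotomy α 0 with hneg | hzero | hpos
      · -- α < 0 : build p contradicting hstar_ge
        have hα' : 0 < -α := by linarith
        set p : EuclideanSpace ℝ (Fin n) :=
          (-α)⁻¹ • (InnerProductSpace.toDual ℝ (EuclideanSpace ℝ (Fin n))).symm
            (f.comp (ContinuousLinearMap.inl ℝ (EuclideanSpace ℝ (Fin n)) ℝ)) with hp
        have hpy : ∀ y : EuclideanSpace ℝ (Fin n), ⟪p, y⟫ = (-α)⁻¹ * f (y, 0) := by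
          intro y
          rw [hp, real_inner_smul_left, InnerProductSpace.toDual_symm_apply]
          simp
        have h2 : (-α)⁻¹ * (-α) = 1 := inv_mul_cancel₀ (ne_of_gt hα')
        have hgen : ∀ c : ℝ, (-α)⁻¹ * (u + c * (-α)) = (-α)⁻¹ * u + c := by
          intro c
          rw [mul_add]
          congr 1
          rw [mul_comm c (-α), ← mul_assoc, h2, one_mul]
        have hHp : H p ≤ (-α)⁻¹ * u := by
          rw [hH p]
          refine ciSup_le fun i => ?_
          rw [hpy]
          have h1 := hfi i
          have h3 : (-α)⁻¹ * f (V i, 0) ≤ (-α)⁻¹ * (u + b i * (-α)) :=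
            mul_le_mul_of_nonneg_left (by linarith) (le_of_lt (inv_pos.mpr hα'))
          have h4 := hgen (b i)
          linarith
        have hv' : (-α)⁻¹ * u + Hstar v < ⟪p, v⟫ := by
          rw [hpy]
          have h3 : (-α)⁻¹ * (u + Hstar v * (-α)) < (-α)⁻¹ * f (v, 0) :=
            mul_lt_mul_of_pos_left (by linarith) (inv_pos.mpr hα')
          have h4 := hgen (Hstar v)
          linarith
        have := hstar_ge p
        linarith
      · -- α = 0
        rw [hzero] at hfv
        have hsum : ∑ i, w i * f (V i, 0) ≤ u := by
          calc ∑ i, w i * f (V i, 0) ≤ ∑ i, w i * u := by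
                refine Finset.sum_le_sum fun i _ => ?_
                have h := hfi i
                rw [hzero] at h
                exact mul_le_mul_of_nonneg_left (by linarith) (hw0 i)
            _ = u := by rw [← Finset.sum_mul, hw1, one_mul]
        rw [hfsum] at hfv
        simp only [mul_zero, add_zero] at hfv
        linarith
      · -- α > 0 : contradicts hstar_le
        have hc : f (v, 0) + (∑ i, w i * b i) * α = ∑ i, w i * (f (V i, 0) + b i * α) := by
          rw [hfsum, Finset.sum_mul, ← Finset.sum_add_distrib]
          exact Finset.sum_congr rfl fun i _ => by ring
        have hsum : f (v, 0) + (∑ i, w i * b i) * α ≤ u := by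
          rw [hc]
          calc ∑ i, w i * (f (V i, 0) + b i * α) ≤ ∑ i, w i * u :=
                Finset.sum_le_sum fun i _ =>
                  mul_le_mul_of_nonneg_left (le_of_lt (hfi i)) (hw0 i)
            _ = u := by rw [← Finset.sum_mul, hw1, one_mul]
        have h6 : (∑ i, w i * b i) * α < Hstar v * α := by linarith
        have h7 : ∑ i, w i * b i < Hstar v := (mul_lt_mul_iff_of_pos_right hpos).mp h6
        linarith
    obtain ⟨μ, hμ0, hμ1, hμv⟩ := exists_fin_weights
      (fun i => ((V i, b i) : EuclideanSpace ℝ (Fin n) × ℝ)) hmem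
    refine ⟨μ, hμ0, hμ1, ?_, ?_⟩
    · have h := congrArg Prod.fst hμv
      simpa [Prod.fst_sum] using h
    · have h := congrArg Prod.snd hμv
      simpa [Prod.snd_sum] using h
  -- lower bound for every v in the hull
  have lower : ∀ v ∈ convexHull ℝ (Set.range V),
      (⨅ i, (J (x - t • V i) + t * b i)) ≤ J (x - t • v) + t * Hstar v := by
    intro v hv
    obtain ⟨μ, hμ0, hμ1, hμV, hμb⟩ := main v hv
    have hxt : ∑ i, μ i • (x - t • V i) = x - t • v := by
      have h : ∑ i, μ i • (x - t • V i) = (∑ i, μ i) • x - t • ∑ i, μ i • V i := by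
        rw [Finset.sum_smul, Finset.smul_sum, ← Finset.sum_sub_distrib]
        exact Finset.sum_congr rfl fun i _ => by rw [smul_sub, smul_comm]
      rw [h, hμ1, one_smul, hμV]
    have hJsum : ∑ i, μ i • J (x - t • V i) ≤ J (x - t • v) := by
      have h := hJ.le_map_sum (t := Finset.univ) (w := μ) (p := fun i => x - t • V i)
        (fun i _ => hμ0 i) (by simpa using hμ1) (fun i _ => Set.mem_univ _)
      rwa [hxt] at h
    simp only [smul_eq_mul] at hJsum
    have hinf : ∀ i, (⨅ j, (J (x - t • V j) + t * b j)) ≤ J (x - t • V i) + t * b i :=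
      fun i => ciInf_le (Set.finite_range _).bddBelow i
    have expand : ∑ i, μ i * (J (x - t • V i) + t * b i)
        = (∑ i, μ i * J (x - t • V i)) + t * ∑ i, μ i * b i := by
      rw [Finset.mul_sum, ← Finset.sum_add_distrib]
      exact Finset.sum_congr rfl fun i _ => by ring
    calc (⨅ j, (J (x - t • V j) + t * b j))
        = ∑ i, μ i * (⨅ j, (J (x - t • V j) + t * b j)) := by
          rw [← Finset.sum_mul, hμ1, one_mul]
      _ ≤ ∑ i, μ i * (J (x - t • V i) + t * b i) :=
          Finset.sum_le_sum fun i _ => mul_le_mul_of_nonneg_left (hinf i) (hμ0 i)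
      _ = (∑ i, μ i * J (x - t • V i)) + t * ∑ i, μ i * b i := expand
      _ ≤ J (x - t • v) + t * Hstar v := by rw [hμb]; linarith
  haveI : Nonempty (convexHull ℝ (Set.range V) : Set (EuclideanSpace ℝ (Fin n))) :=
    ⟨⟨V ⟨0, hm⟩, hVK _⟩⟩
  have hbddK : BddBelow (Set.range fun v : (convexHull ℝ (Set.range V) :
      Set (EuclideanSpace ℝ (Fin n))) =>
      J (x - t • (v : EuclideanSpace ℝ (Fin n))) + t * Hstar v) := by
    refine ⟨⨅ i, (J (x - t • V i) + t * b i), ?_⟩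
    rintro y ⟨v, rfl⟩
    exact lower v v.2
  apply le_antisymm
  · refine le_ciInf fun i => ?_
    have h1 : Hstar (V i) ≤ b i := by
      have hub := hterm (fun j => if j = i then 1 else 0)
        (fun j => by by_cases h : j = i <;> simp [h]) (by simp) (V i) (by simp)
      rw [hHstar (V i) (hVK i)]
      refine ciSup_le fun p => ?_
      have h := hub p
      simpa using h
    have h2 : t * Hstar (V i) ≤ t * b i := mul_le_mul_of_nonneg_left h1 ht.le
    calc (⨅ v : (convexHull ℝ (Set.range V) : Set (EuclideanSpace ℝ (Fin n))),
          (J (x - t • (v : EuclideanSpace ℝ (Fin n))) + t * Hstar v))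
        ≤ J (x - t • V i) + t * Hstar (V i) := ciInf_le hbddK ⟨V i, hVK i⟩
      _ ≤ J (x - t • V i) + t * b i := by linarith
  · refine le_ciInf fun v => ?_
    exact lower v v.2
end
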